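/- Let (Ω, μ) be a measure space and let p, q : Ω → ℝ be measurable with p(x) > 0 and q(x) > 0 for μ-almost every x, ∫_Ω p dμ = 1 and ∫_Ω q dμ = 1, and suppose the function x ↦ q(x) log( p(x)/q(x) ) is μ-integrable. Then lim_{ℓ → ∞} ∫_Ω ℓ ( 1 − ( p(x)/q(x) )^{1/ℓ} ) q(x) dμ(x) = − ∫_Ω q(x) log( p(x)/q(x) ) dμ(x), where the limit is over positive integers ℓ. -/

import Mathlib

open MeasureTheory Real Filter

lemma aux_tendsto_one_sub_rpow {t : ℝ} (ht : 0 < t) :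
    Tendsto (fun ℓ : ℕ => (ℓ : ℝ) * (1 - t ^ (1 / (ℓ : ℝ)))) atTop (nhds (-Real.log t)) := by
  have hd : HasDerivAt (fun s : ℝ => t ^ s) (Real.log t) 0 := by
    simpa using (Real.hasStrictDerivAt_const_rpow ht 0).hasDerivAt
  have hslope : Tendsto (slope (fun s : ℝ => t ^ s) 0) (nhdsWithin 0 {0}ᶜ) (nhds (Real.log t)) :=
    hasDerivAt_iff_tendsto_slope.mp hd
  have h1 : Tendsto (fun ℓ : ℕ => 1 / (ℓ : ℝ)) atTop (nhdsWithin 0 {0}ᶜ) := by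
    apply tendsto_nhdsWithin_of_tendsto_nhds_of_eventually_within _
      tendsto_one_div_atTop_nhds_zero_nat
    filter_upwards [eventually_gt_atTop 0] with n hn
    simp only [Set.mem_compl_iff, Set.mem_singleton_iff]
    positivity
  have h2 := (hslope.comp h1).neg
  rw [show -Real.log t = -Real.log t from rfl]
  refine h2.congr' ?_
  filter_upwards [eventually_gt_atTop 0] with n hn
  have hn' : (n : ℝ) ≠ 0 := by positivity
  simp only [Function.comp, slope_def_field]
  rw [Real.rpow_zero]
  field_simp
  ring

theorem tendsto_integral_one_sub_rpow {Ω : Type*} [MeasurableSpace Ω] (μ : Measure Ω)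
    (p q : Ω → ℝ) (hp : Measurable p) (hq : Measurable q)
    (hppos : ∀ᵐ x ∂μ, 0 < p x) (hqpos : ∀ᵐ x ∂μ, 0 < q x)
    (hpI : ∫ x, p x ∂μ = 1) (hqI : ∫ x, q x ∂μ = 1)
    (hint : Integrable (fun x => q x * Real.log (p x / q x)) μ) :
    Tendsto (fun ℓ : ℕ => ∫ x, (ℓ : ℝ) * (1 - (p x / q x) ^ (1 / (ℓ : ℝ))) * q x ∂μ)
      atTop (nhds (-∫ x, q x * Real.log (p x / q x) ∂μ)) := by
  have hpInt : Integrable p μ := integrable_of_integral_eq_one hpI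
  have hqInt : Integrable q μ := integrable_of_integral_eq_one hqI
  rw [← integral_neg]
  apply tendsto_integral_of_dominated_convergence
    (fun x => |q x - p x| + |q x * Real.log (p x / q x)|)
  · intro n
    exact ((measurable_const.mul (((hp.div hq).pow measurable_const).const_sub 1)).mul
      hq).aestronglyMeasurable
  · exact ((hqInt.sub hpInt).abs.add hint.abs)
  · intro n
    filter_upwards [hppos, hqpos] with x hpx hqx
    set t := p x / q x with htdef
    have ht : 0 < t := div_pos hpx hqx
    rcases Nat.eq_zero_or_pos n with rfl | hn
    · simp only [Nat.cast_zero, zero_mul, norm_zero]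
      positivity
    · have hn1 : (1 : ℝ) ≤ (n : ℝ) := by exact_mod_cast hn
      have hnpos : (0 : ℝ) < n := by linarith
      -- upper bound: n * (1 - t^(1/n)) ≤ -log t
      have hub : (n : ℝ) * (1 - t ^ (1 / (n : ℝ))) ≤ -Real.log t := by
        have hexp : 1 + (1 / (n : ℝ)) * Real.log t ≤ t ^ (1 / (n : ℝ)) := by
          rw [Real.rpow_def_of_pos ht]
          nlinarith [Real.add_one_le_exp (Real.log t * (1 / (n : ℝ)))]
        have h3 : 1 - t ^ (1 / (n : ℝ)) ≤ -((1 / (n : ℝ)) * Real.log t) := by linarith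
        calc (n : ℝ) * (1 - t ^ (1 / (n : ℝ)))
            ≤ (n : ℝ) * (-((1 / (n : ℝ)) * Real.log t)) :=
              mul_le_mul_of_nonneg_left h3 (le_of_lt hnpos)
          _ = -Real.log t := by field_simp
      have hlb : 1 - t ≤ (n : ℝ) * (1 - t ^ (1 / (n : ℝ))) := by
        have hb : t ^ (1 / (n : ℝ)) ≤ 1 + (1 / (n : ℝ)) * (t - 1) := by
          have := rpow_one_add_le_one_add_mul_self (s := t - 1) (by linarith) (p := 1 / (n : ℝ))
            (by positivity) ((div_le_one hnpos).mpr hn1)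
          simpa using this
        have h3 : 1 - (1 + (1 / (n : ℝ)) * (t - 1)) ≤ 1 - t ^ (1 / (n : ℝ)) := by linarith
        calc (1 : ℝ) - t = (n : ℝ) * (1 - (1 + (1 / (n : ℝ)) * (t - 1))) := by
              field_simp; ring
          _ ≤ (n : ℝ) * (1 - t ^ (1 / (n : ℝ))) :=
              mul_le_mul_of_nonneg_left h3 (le_of_lt hnpos)
      have habsA : |(n : ℝ) * (1 - t ^ (1 / (n : ℝ)))| ≤ |1 - t| + |Real.log t| := by
        rw [abs_le]
        constructor
        · nlinarith [neg_abs_le (1 - t), abs_nonneg (Real.log t)]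
        · nlinarith [neg_le_abs (Real.log t), abs_nonneg (1 - t)]
      have h1mul : t * q x = p x := div_mul_cancel₀ _ (ne_of_gt hqx)
      have e1 : |1 - t| * q x = |q x - p x| := by
        rw [show |q x - p x| = |(1 - t) * q x| by rw [sub_mul, one_mul, h1mul], abs_mul,
          abs_of_pos hqx]
      have e2 : |Real.log t| * q x = |q x * Real.log (p x / q x)| := by
        rw [abs_mul, abs_of_pos hqx, mul_comm, htdef]
      calc ‖(n : ℝ) * (1 - t ^ (1 / (n : ℝ))) * q x‖
          = |(n : ℝ) * (1 - t ^ (1 / (n : ℝ)))| * q x := by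
            rw [Real.norm_eq_abs, abs_mul, abs_of_pos hqx]
        _ ≤ (|1 - t| + |Real.log t|) * q x := mul_le_mul_of_nonneg_right habsA hqx.le
        _ = |q x - p x| + |q x * Real.log (p x / q x)| := by rw [add_mul, e1, e2]
  · filter_upwards [hppos, hqpos] with x hpx hqx
    have ht : 0 < p x / q x := div_pos hpx hqx
    have h := (aux_tendsto_one_sub_rpow ht).mul_const (q x)
    rwa [show -Real.log (p x / q x) * q x = -(q x * Real.log (p x / q x)) by ring] at h
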